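/- arXiv:1110.5014 — 7 statements merged into one kernel-verified Lean document; each statement's English description precedes it below -/
import Mathlib

section
/- Let D be the derivation on ℤ[y,z] with D(y) = yz and D(z) = y². Then for all n ≥ 1, D^n(z) = Σ_{k=0}^{⌊(n-1)/2⌋} W(n,k)·y^{2k+2}·z^{n-2k-1}, where W(n,k) is the number of permutations of [n] with k interior peaks. -/
open Finset Polynomial

/-- `pval π i` is the value `π(i+1)` of the permutation in one-based value convention
(values `1,…,n`), and `0` for indices out of range. -/
def pval {n : ℕ} (π : Equiv.Perm (Fin n)) (i : ℕ) : ℕ :=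
  if h : i < n then (π ⟨i, h⟩ : ℕ) + 1 else 0

/-- number of interior peaks of `π` -/
def intPeaks {n : ℕ} (π : Equiv.Perm (Fin n)) : ℕ :=
  ((Finset.Ioo 0 (n - 1)).filter (fun i =>
    pval π (i-1) < pval π i ∧ pval π (i+1) < pval π i)).card

/-- `W(n,k)`: the number of permutations of `[n]` with `k` interior peaks -/
def peakNum (n k : ℕ) : ℕ :=
  (Finset.univ.filter (fun π : Equiv.Perm (Fin n) => intPeaks π = k)).card

def Pk {n : ℕ} (π : Equiv.Perm (Fin n)) (i : ℕ) : Prop :=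
  pval π (i-1) < pval π i ∧ pval π (i+1) < pval π i

instance {n : ℕ} (π : Equiv.Perm (Fin n)) (i : ℕ) : Decidable (Pk π i) := by
  unfold Pk; infer_instance

def peakset {n : ℕ} (π : Equiv.Perm (Fin n)) : Finset ℕ :=
  (Finset.Ioo 0 (n - 1)).filter (fun i => Pk π i)

lemma intPeaks_eq {n : ℕ} (π : Equiv.Perm (Fin n)) : intPeaks π = (peakset π).card := rfl

lemma mem_peakset {n : ℕ} {π : Equiv.Perm (Fin n)} {i : ℕ} :
    i ∈ peakset π ↔ (0 < i ∧ i < n - 1) ∧ Pk π i := by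
  simp [peakset, mem_filter, mem_Ioo]

lemma peakset_spacing {n : ℕ} {π : Equiv.Perm (Fin n)} {i : ℕ}
    (h1 : i ∈ peakset π) (h2 : i + 1 ∈ peakset π) : False := by
  rw [mem_peakset] at h1 h2
  have a := h1.2.2
  have b := h2.2.1
  simp only [Nat.add_sub_cancel] at b
  omega

def ins {n : ℕ} (π : Equiv.Perm (Fin n)) (p : Fin (n+1)) : Equiv.Perm (Fin (n+1)) :=
  (finSuccEquiv' p).trans ((Equiv.optionCongr π).trans (finSuccEquiv' (Fin.last n)).symm)

lemma ins_self {n : ℕ} (π : Equiv.Perm (Fin n)) (p : Fin (n+1)) : ins π p p = Fin.last n := by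
  simp [ins, finSuccEquiv'_at, finSuccEquiv'_symm_none]

lemma ins_succAbove {n : ℕ} (π : Equiv.Perm (Fin n)) (p : Fin (n+1)) (j : Fin n) :
    ins π p (p.succAbove j) = (π j).castSucc := by
  simp [ins, finSuccEquiv'_succAbove, finSuccEquiv'_symm_some, Fin.succAbove_last]

lemma pval_le {n : ℕ} (π : Equiv.Perm (Fin n)) (i : ℕ) : pval π i ≤ n := by
  unfold pval; split
  · exact Nat.succ_le_of_lt (π _).isLt
  · exact Nat.zero_le _

lemma pval_ins_lt {n : ℕ} (π : Equiv.Perm (Fin n)) (p : Fin (n+1)) {i : ℕ} (h : i < p.val) :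
    pval (ins π p) i = pval π i := by
  have hin : i < n := lt_of_lt_of_le h (Nat.lt_succ_iff.mp p.isLt)
  have hin1 : i < n + 1 := Nat.lt_succ_of_lt hin
  have key : (⟨i, hin1⟩ : Fin (n+1)) = p.succAbove ⟨i, hin⟩ := by
    rw [Fin.succAbove_of_castSucc_lt]
    · rfl
    · exact h
  unfold pval
  rw [dif_pos hin1, dif_pos hin, key, ins_succAbove]
  rfl

lemma pval_ins_self {n : ℕ} (π : Equiv.Perm (Fin n)) (p : Fin (n+1)) :
    pval (ins π p) p.val = n + 1 := by
  unfold pval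
  rw [dif_pos p.isLt]
  have : (⟨p.val, p.isLt⟩ : Fin (n+1)) = p := rfl
  rw [this, ins_self]
  rfl

lemma pval_ins_gt {n : ℕ} (π : Equiv.Perm (Fin n)) (p : Fin (n+1)) {i : ℕ}
    (h : p.val < i) (hi : i ≤ n) :
    pval (ins π p) i = pval π (i-1) := by
  have h1 : 1 ≤ i := Nat.one_le_iff_ne_zero.mpr (by omega)
  have hin : i - 1 < n := by omega
  have hin1 : i < n + 1 := by omega
  have key : (⟨i, hin1⟩ : Fin (n+1)) = p.succAbove ⟨i-1, hin⟩ := by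
    rw [Fin.succAbove_of_le_castSucc]
    · ext; simp [Fin.succ]; omega
    · rw [Fin.le_castSucc_iff]
      simp only [Fin.lt_def, Fin.succ]
      omega
  unfold pval
  rw [dif_pos hin1, dif_pos hin, key, ins_succAbove]
  rfl

lemma pk_ins_iff {n : ℕ} (π : Equiv.Perm (Fin n)) (p : Fin (n+1)) {i : ℕ}
    (hi0 : 0 < i) (hin : i < n) :
    Pk (ins π p) i ↔
      (i + 1 < p.val ∧ Pk π i) ∨ i = p.val ∨ (p.val + 1 < i ∧ Pk π (i-1)) := by
  have hq : p.val ≤ n := Nat.lt_succ_iff.mp p.isLt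
  unfold Pk
  rcases lt_trichotomy (i+1) p.val with h | h | h
  · rw [pval_ins_lt π p (by omega : i - 1 < p.val), pval_ins_lt π p (by omega : i < p.val),
      pval_ins_lt π p h]
    constructor
    · intro hc; exact Or.inl ⟨h, hc⟩
    · rintro (⟨_, hc⟩ | h' | ⟨h', _⟩) <;> [exact hc; omega; omega]
  · -- i + 1 = p.val
    have A : pval (ins π p) (i-1) = pval π (i-1) := pval_ins_lt π p (by omega)
    have B : pval (ins π p) i = pval π i := pval_ins_lt π p (by omega)
    have C : pval (ins π p) (i+1) = n + 1 := by rw [h]; exact pval_ins_self π p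
    rw [A, B, C]
    have bd := pval_le π i
    constructor
    · intro hc; omega
    · rintro (⟨h', _⟩ | h' | ⟨h', _⟩) <;> omega
  · rcases lt_trichotomy i p.val with h2 | h2 | h2
    · omega
    · -- i = p.val
      have A : pval (ins π p) (i-1) = pval π (i-1) := pval_ins_lt π p (by omega)
      have B : pval (ins π p) i = n + 1 := by rw [h2]; exact pval_ins_self π p
      have C : pval (ins π p) (i+1) = pval π i := by
        rw [pval_ins_gt π p (by omega) (by omega)]
        congr 1
      rw [A, B, C]
      have b1 := pval_le π (i-1)
      have b2 := pval_le π i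
      constructor
      · intro _; exact Or.inr (Or.inl h2)
      · intro _; omega
    · -- p.val < i
      rcases Nat.lt_or_ge (p.val + 1) i with h3 | h3
      · have A : pval (ins π p) (i-1) = pval π (i-2) := by
          rw [pval_ins_gt π p (by omega : p.val < i - 1) (by omega)]
          congr 1
        have B : pval (ins π p) i = pval π (i-1) := pval_ins_gt π p h2 (by omega)
        have C : pval (ins π p) (i+1) = pval π i := pval_ins_gt π p (by omega) (by omega)
        rw [A, B, C]
        have e1 : i - 1 - 1 = i - 2 := by omega
        have e3 : i - 1 + 1 = i := by omega
        rw [e1, e3]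
        constructor
        · intro hc; exact Or.inr (Or.inr ⟨h3, hc⟩)
        · rintro (⟨h', _⟩ | h' | ⟨_, hc⟩) <;> [omega; omega; exact hc]
      · -- i = p.val + 1
        have A : pval (ins π p) (i-1) = n + 1 := by
          rw [(by omega : i - 1 = p.val)]; exact pval_ins_self π p
        have B : pval (ins π p) i ≤ n := by
          rw [pval_ins_gt π p h2 (by omega)]; exact pval_le π (i-1)
        constructor
        · intro hc; rw [A] at hc; omega
        · rintro (h' | h' | h') <;> omega

def Bset {n : ℕ} (π : Equiv.Perm (Fin n)) : Finset ℕ :=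
  insert 0 (insert n ((peakset π).biUnion (fun i => {i, i+1})))

lemma peakset_ins {n : ℕ} (π : Equiv.Perm (Fin n)) (p : Fin (n+1)) :
    peakset (ins π p) =
      ((peakset π).filter (fun i => i ≠ p.val ∧ i+1 ≠ p.val)).image
        (fun i => if i < p.val then i else i+1) ∪
      (if 0 < p.val ∧ p.val < n then {p.val} else ∅) := by
  have hq : p.val ≤ n := Nat.lt_succ_iff.mp p.isLt
  ext i
  rw [mem_peakset]
  simp only [Nat.add_sub_cancel, mem_union, mem_image, mem_filter, mem_peakset]
  constructor
  · rintro ⟨⟨hi0, hin⟩, hpk⟩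
    rw [pk_ins_iff π p hi0 hin] at hpk
    rcases hpk with ⟨h1, h2⟩ | h1 | ⟨h1, h2⟩
    · left
      refine ⟨i, ⟨⟨⟨by omega, by omega⟩, h2⟩, by omega, by omega⟩, if_pos (by omega)⟩
    · right
      rw [if_pos (by omega)]
      simp [h1]
    · left
      refine ⟨i - 1, ⟨⟨⟨by omega, by omega⟩, h2⟩, by omega, by omega⟩, ?_⟩
      rw [if_neg (by omega)]
      omega
  · rintro (⟨j, ⟨⟨⟨hj0, hjn⟩, hjpk⟩, hne1, hne2⟩, hF⟩ | hmem)
    · by_cases hlt : j < p.val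
      · rw [if_pos hlt] at hF
        subst hF
        refine ⟨⟨by omega, by omega⟩, ?_⟩
        rw [pk_ins_iff π p (by omega) (by omega)]
        exact Or.inl ⟨by omega, hjpk⟩
      · rw [if_neg hlt] at hF
        subst hF
        refine ⟨⟨by omega, by omega⟩, ?_⟩
        rw [pk_ins_iff π p (by omega) (by omega)]
        refine Or.inr (Or.inr ⟨by omega, ?_⟩)
        simpa using hjpk
    · split at hmem
      · next hc =>
        simp only [mem_singleton] at hmem
        subst hmem
        refine ⟨⟨by omega, by omega⟩, ?_⟩
        rw [pk_ins_iff π p (by omega) (by omega)]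
        exact Or.inr (Or.inl rfl)
      · simp at hmem

lemma intPeaks_ins {n : ℕ} (π : Equiv.Perm (Fin n)) (p : Fin (n+1)) :
    intPeaks (ins π p) =
      if p.val ∈ Bset π then intPeaks π else intPeaks π + 1 := by
  have hq : p.val ≤ n := Nat.lt_succ_iff.mp p.isLt
  have hcard : intPeaks (ins π p) =
      ((peakset π).filter (fun i => i ≠ p.val ∧ i+1 ≠ p.val)).card
        + (if 0 < p.val ∧ p.val < n then 1 else 0) := by
    rw [intPeaks_eq, peakset_ins π p, card_union_of_disjoint, Finset.card_image_of_injOn]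
    · congr 1
      split
      · simp
      · simp
    · intro a ha b hb hab
      simp only [Set.mem_image, coe_filter] at *
      by_cases h1 : a < p.val <;> by_cases h2 : b < p.val <;>
        simp only [if_pos, if_neg, h1, h2, if_true, if_false] at hab <;> omega
    · rw [Finset.disjoint_right]
      intro x hx
      split at hx
      · simp only [mem_singleton] at hx
        subst hx
        simp only [mem_image, mem_filter, not_exists]
        rintro j ⟨⟨_, hj1, hj2⟩, hF⟩
        split at hF <;> omega
      · simp at hx
  rw [hcard]
  by_cases hB : p.val ∈ Bset π
  · rw [if_pos hB]
    simp only [Bset, mem_insert, mem_biUnion, mem_insert, mem_singleton] at hB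
    rcases hB with h0 | hn | ⟨i₀, hi₀, hq'⟩
    · have hful : ∀ x ∈ peakset π, x ≠ p.val ∧ x + 1 ≠ p.val := by
        intro i hi; rw [mem_peakset] at hi; omega
      rw [filter_true_of_mem hful, if_neg (by omega), intPeaks_eq]
      omega
    · have hful : ∀ x ∈ peakset π, x ≠ p.val ∧ x + 1 ≠ p.val := by
        intro i hi; rw [mem_peakset] at hi; omega
      rw [filter_true_of_mem hful, if_neg (by omega), intPeaks_eq]
      omega
    · have hi₀m := hi₀
      rw [mem_peakset] at hi₀m
      have hfe : (peakset π).filter (fun i => i ≠ p.val ∧ i+1 ≠ p.val)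
          = (peakset π).erase i₀ := by
        ext i
        simp only [mem_filter, mem_erase]
        constructor
        · rintro ⟨hi, h1, h2⟩
          exact ⟨by omega, hi⟩
        · rintro ⟨hne, hi⟩
          refine ⟨hi, ?_, ?_⟩
          · intro h'
            rcases hq' with h | h
            · omega
            · have he : i = i₀ + 1 := by omega
              exact peakset_spacing hi₀ (he ▸ hi)
          · intro h'
            rcases hq' with h | h
            · have he : i + 1 = i₀ := by omega
              exact peakset_spacing hi (he ▸ hi₀ : i + 1 ∈ peakset π)
            · omega
      rw [hfe, Finset.card_erase_of_mem hi₀, if_pos (by omega), intPeaks_eq]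
      have : 0 < (peakset π).card := Finset.card_pos.mpr ⟨i₀, hi₀⟩
      omega
  · rw [if_neg hB]
    have h0 : p.val ≠ 0 := by
      intro h; exact hB (by simp [Bset, h])
    have hnn : p.val ≠ n := by
      intro h; exact hB (by simp [Bset, h])
    have hadj : ∀ i ∈ peakset π, p.val ≠ i ∧ p.val ≠ i + 1 := by
      intro i hi
      constructor <;> intro h <;> refine hB ?_ <;>
        · simp only [Bset, mem_insert, mem_biUnion, mem_insert, mem_singleton]
          right; right
          exact ⟨i, hi, by omega⟩
    have hful : ∀ x ∈ peakset π, x ≠ p.val ∧ x + 1 ≠ p.val := by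
      intro i hi
      have := hadj i hi
      omega
    rw [filter_true_of_mem hful, if_pos (by omega), intPeaks_eq]

lemma card_Bset {n : ℕ} (π : Equiv.Perm (Fin n)) (hn : 1 ≤ n) :
    (Bset π).card = 2 * intPeaks π + 2 := by
  have hdisj : ∀ i ∈ peakset π, ∀ i' ∈ peakset π, i ≠ i' →
      Disjoint ({i, i+1} : Finset ℕ) {i', i'+1} := by
    intro i hi i' hi' hne
    rw [Finset.disjoint_left]
    intro x hx hx'
    simp only [mem_insert, mem_singleton] at hx hx'
    rcases hx with rfl | rfl <;> rcases hx' with h | h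
    · exact hne h
    · exact peakset_spacing hi' (h ▸ hi)
    · exact peakset_spacing hi (h ▸ hi')
    · exact hne (by omega)
  have hbU : ((peakset π).biUnion (fun i => {i, i+1})).card = 2 * intPeaks π := by
    rw [Finset.card_biUnion hdisj, intPeaks_eq]
    have hc : ∀ i ∈ peakset π, ({i, i+1} : Finset ℕ).card = 2 := by
      intro i _
      rw [Finset.card_insert_of_notMem (by simp), Finset.card_singleton]
    rw [Finset.sum_congr rfl hc, Finset.sum_const, smul_eq_mul, Nat.mul_comm]
  have h0 : (0 : ℕ) ∉ insert n ((peakset π).biUnion (fun i => {i, i+1})) := by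
    simp only [mem_insert, mem_biUnion, mem_insert, mem_singleton, not_or, not_exists]
    refine ⟨by omega, ?_⟩
    intro i hi
    rw [mem_peakset] at hi
    omega
  have hnn : n ∉ (peakset π).biUnion (fun i => {i, i+1}) := by
    simp only [mem_biUnion, mem_insert, mem_singleton, not_exists]
    intro i hi
    rw [mem_peakset] at hi
    omega
  rw [Bset, Finset.card_insert_of_notMem h0, Finset.card_insert_of_notMem hnn, hbU]

lemma Bset_subset {n : ℕ} (π : Equiv.Perm (Fin n)) : Bset π ⊆ Finset.range (n+1) := by
  intro x hx
  simp only [Bset, mem_insert, mem_biUnion, mem_insert, mem_singleton] at hx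
  rw [mem_range]
  rcases hx with rfl | rfl | ⟨i, hi, h⟩
  · omega
  · omega
  · rw [mem_peakset] at hi
    omega

lemma two_intPeaks_le {n : ℕ} (π : Equiv.Perm (Fin n)) : 2 * intPeaks π ≤ n - 1 := by
  by_cases hn : 1 ≤ n
  · have h1 := card_Bset π hn
    have h2 := Finset.card_le_card (Bset_subset π)
    rw [Finset.card_range] at h2
    omega
  · have hn0 : n = 0 := by omega
    subst hn0
    rw [intPeaks_eq]
    have he : peakset π = ∅ := by
      ext i
      rw [mem_peakset]
      simp only [Finset.notMem_empty, iff_false, not_and]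
      omega
    simp [he]

lemma ins_bijective {n : ℕ} :
    Function.Bijective (fun x : Equiv.Perm (Fin n) × Fin (n+1) => ins x.1 x.2) := by
  rw [Fintype.bijective_iff_injective_and_card]
  constructor
  · rintro ⟨π, p⟩ ⟨π', p'⟩ h
    simp only at h
    have hp : p = p' := by
      apply (ins π p).injective
      rw [ins_self, h, ins_self]
    subst hp
    have hπ : π = π' := by
      ext j
      have h2 : (ins π p) (p.succAbove j) = (ins π' p) (p.succAbove j) := by rw [h]
      rw [ins_succAbove, ins_succAbove] at h2
      exact Fin.val_eq_of_eq (Fin.castSucc_injective _ h2)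
    rw [hπ]
  · simp only [Fintype.card_prod, Fintype.card_perm, Fintype.card_fin]
    rw [Nat.factorial_succ]
    ring

lemma card_val_mem {n : ℕ} (B : Finset ℕ) (hB : B ⊆ Finset.range (n+1)) :
    (Finset.univ.filter (fun p : Fin (n+1) => p.val ∈ B)).card = B.card := by
  apply Finset.card_bij (fun p _ => p.val)
  · intro a ha; exact (mem_filter.mp ha).2
  · intro a _ b _ h; exact Fin.val_injective h
  · intro b hb; exact ⟨⟨b, mem_range.mp (hB hb)⟩, mem_filter.mpr ⟨mem_univ _, hb⟩, rfl⟩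

lemma count_p {n : ℕ} (π : Equiv.Perm (Fin n)) (hn : 1 ≤ n) (k : ℕ) :
    (∑ p : Fin (n+1), if intPeaks (ins π p) = k then 1 else 0) =
      (if intPeaks π = k then 2*k+2 else 0) +
      (if intPeaks π + 1 = k then n - 2*(k-1) - 1 else 0) := by
  have hsum : ∀ p : Fin (n+1),
      (if intPeaks (ins π p) = k then (1:ℕ) else 0) =
      (if (if p.val ∈ Bset π then intPeaks π else intPeaks π + 1) = k then 1 else 0) := by
    intro p; rw [intPeaks_ins]
  rw [Finset.sum_congr rfl (fun p _ => hsum p)]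
  have hmem : (Finset.univ.filter (fun p : Fin (n+1) => p.val ∈ Bset π)).card
      = 2 * intPeaks π + 2 := by
    rw [card_val_mem (Bset π) (Bset_subset π), card_Bset π hn]
  have hnot : (Finset.univ.filter (fun p : Fin (n+1) => ¬ p.val ∈ Bset π)).card
      = n - 2 * intPeaks π - 1 := by
    have h1 := Finset.card_filter_add_card_filter_not
      (s := (Finset.univ : Finset (Fin (n+1)))) (p := fun p => p.val ∈ Bset π)
    rw [Finset.card_univ, Fintype.card_fin] at h1
    have h2 := two_intPeaks_le π
    omega
  by_cases hjk : intPeaks π = k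
  · have hne : ¬ (intPeaks π + 1 = k) := by omega
    rw [if_pos hjk, if_neg hne]
    have : ∀ p : Fin (n+1),
        (if (if p.val ∈ Bset π then intPeaks π else intPeaks π + 1) = k then (1:ℕ) else 0)
          = if p.val ∈ Bset π then 1 else 0 := by
      intro p
      by_cases h : p.val ∈ Bset π
      · rw [if_pos h, if_pos h, if_pos hjk]
      · rw [if_neg h, if_neg h, if_neg (by omega)]
    rw [Finset.sum_congr rfl (fun p _ => this p), ← Finset.sum_filter]
    simp only [Finset.sum_const, smul_eq_mul, mul_one]
    rw [hmem]
    omega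
  · by_cases hjk1 : intPeaks π + 1 = k
    · rw [if_neg hjk, if_pos hjk1]
      have : ∀ p : Fin (n+1),
          (if (if p.val ∈ Bset π then intPeaks π else intPeaks π + 1) = k then (1:ℕ) else 0)
            = if ¬ p.val ∈ Bset π then 1 else 0 := by
        intro p
        by_cases h : p.val ∈ Bset π
        · rw [if_pos h, if_neg hjk, if_neg (by tauto)]
        · rw [if_neg h, if_pos hjk1, if_pos (by tauto)]
      rw [Finset.sum_congr rfl (fun p _ => this p), ← Finset.sum_filter]
      simp only [Finset.sum_const, smul_eq_mul, mul_one]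
      rw [hnot]
      omega
    · rw [if_neg hjk, if_neg hjk1]
      have : ∀ p : Fin (n+1),
          (if (if p.val ∈ Bset π then intPeaks π else intPeaks π + 1) = k then (1:ℕ) else 0)
            = 0 := by
        intro p
        by_cases h : p.val ∈ Bset π
        · rw [if_pos h, if_neg hjk]
        · rw [if_neg h, if_neg hjk1]
      rw [Finset.sum_congr rfl (fun p _ => this p)]
      simp

lemma peakNum_rec {n : ℕ} (hn : 1 ≤ n) (k : ℕ) :
    peakNum (n+1) k = (2*k+2) * peakNum n k +
      (if k = 0 then 0 else (n - 2*(k-1) - 1) * peakNum n (k-1)) := by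
  unfold peakNum
  rw [Finset.card_filter]
  rw [← Fintype.sum_bijective _ ins_bijective
    (fun x : Equiv.Perm (Fin n) × Fin (n+1) => if intPeaks (ins x.1 x.2) = k then (1:ℕ) else 0)
    (fun σ => if intPeaks σ = k then (1:ℕ) else 0) (fun x => rfl)]
  rw [Fintype.sum_prod_type]
  have : ∀ π : Equiv.Perm (Fin n),
      (∑ p : Fin (n+1), if intPeaks (ins π p) = k then (1:ℕ) else 0) =
      (if intPeaks π = k then 2*k+2 else 0) +
      (if intPeaks π + 1 = k then n - 2*(k-1) - 1 else 0) := fun π => count_p π hn k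
  rw [Finset.sum_congr rfl (fun π _ => this π), Finset.sum_add_distrib]
  congr 1
  · rw [← Finset.sum_filter]
    simp only [Finset.sum_const, smul_eq_mul]
    rw [mul_comm]
  · by_cases hk : k = 0
    · subst hk
      simp
    · rw [if_neg hk]
      have heq : ∀ π : Equiv.Perm (Fin n),
          (if intPeaks π + 1 = k then n - 2*(k-1) - 1 else (0:ℕ)) =
          (if intPeaks π = k - 1 then n - 2*(k-1) - 1 else 0) := by
        intro π
        by_cases h : intPeaks π + 1 = k
        · rw [if_pos h, if_pos (by omega)]
        · rw [if_neg h, if_neg (by omega)]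
      rw [Finset.sum_congr rfl (fun π _ => heq π), ← Finset.sum_filter]
      simp only [Finset.sum_const, smul_eq_mul]
      rw [mul_comm]

lemma peakNum_eq_zero {n k : ℕ} (h : (n-1)/2 < k) : peakNum n k = 0 := by
  unfold peakNum
  rw [Finset.card_eq_zero, Finset.filter_eq_empty_iff]
  intro π _
  intro hc
  have h2 := two_intPeaks_le π
  rw [hc] at h2
  omega

open MvPolynomial in
lemma D_cast_mul (D : Derivation ℤ (MvPolynomial (Fin 2) ℤ) (MvPolynomial (Fin 2) ℤ))
    (c : ℕ) (x : MvPolynomial (Fin 2) ℤ) :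
    D ((c : MvPolynomial (Fin 2) ℤ) * x) = (c : MvPolynomial (Fin 2) ℤ) * D x := by
  have hc : D (c : MvPolynomial (Fin 2) ℤ) = 0 := by
    rw [← map_natCast (algebraMap ℤ (MvPolynomial (Fin 2) ℤ)) c]
    exact Derivation.map_algebraMap D _
  rw [Derivation.leibniz, hc, smul_zero, add_zero, smul_eq_mul]

open MvPolynomial in
lemma Dterm (D : Derivation ℤ (MvPolynomial (Fin 2) ℤ) (MvPolynomial (Fin 2) ℤ))
    (hy : D (X 0) = X 0 * X 1) (hz : D (X 1) = X 0 ^ 2)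
    (a b : ℕ) (ha : 1 ≤ a) :
    D (X 0 ^ a * X 1 ^ b) = (a : MvPolynomial (Fin 2) ℤ) * (X 0 ^ a * X 1 ^ (b+1))
      + (b : MvPolynomial (Fin 2) ℤ) * (X 0 ^ (a+2) * X 1 ^ (b-1)) := by
  obtain ⟨a', rfl⟩ : ∃ a', a = a' + 1 := ⟨a - 1, by omega⟩
  rw [Derivation.leibniz, Derivation.leibniz_pow, Derivation.leibniz_pow, hy, hz]
  simp only [Nat.add_sub_cancel, smul_eq_mul, nsmul_eq_mul]
  cases b with
  | zero => push_cast; ring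
  | succ b' =>
    simp only [Nat.add_sub_cancel]
    push_cast
    ring

open MvPolynomial in
lemma key_sum (D : Derivation ℤ (MvPolynomial (Fin 2) ℤ) (MvPolynomial (Fin 2) ℤ))
    (hy : D (X 0) = X 0 * X 1) (hz : D (X 1) = X 0 ^ 2) :
    ∀ n : ℕ, 1 ≤ n →
      (⇑D)^[n] (X 1)
        = ∑ k ∈ Finset.range (n+1),
            (peakNum n k : MvPolynomial (Fin 2) ℤ) * X 0 ^ (2*k + 2) * X 1 ^ (n - 2*k - 1) := by
  intro n hn
  induction n, hn using Nat.le_induction with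
  | base =>
    have h10 : peakNum 1 0 = 1 := by decide
    have h11 : peakNum 1 1 = 0 := by decide
    rw [Function.iterate_one, hz]
    rw [Finset.sum_range_succ, Finset.sum_range_succ, Finset.sum_range_zero, h10, h11]
    push_cast
    ring
  | succ n hn IH =>
    rw [Function.iterate_succ_apply', IH, map_sum]
    set A : ℕ → MvPolynomial (Fin 2) ℤ := fun k =>
      ((peakNum n k * (2*k+2) : ℕ) : MvPolynomial (Fin 2) ℤ) * (X 0 ^ (2*k+2) * X 1 ^ (n-2*k))
      with hA
    set Bt : ℕ → MvPolynomial (Fin 2) ℤ := fun k =>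
      ((peakNum n k * (n-2*k-1) : ℕ) : MvPolynomial (Fin 2) ℤ)
        * (X 0 ^ (2*(k+1)+2) * X 1 ^ (n-2*(k+1))) with hB
    set g : ℕ → MvPolynomial (Fin 2) ℤ := fun j =>
      if j = 0 then 0 else
        ((peakNum n (j-1) * (n - 2*(j-1) - 1) : ℕ) : MvPolynomial (Fin 2) ℤ)
          * (X 0 ^ (2*j+2) * X 1 ^ (n-2*j)) with hg
    have hDterm : ∀ k ∈ Finset.range (n+1),
        D ((peakNum n k : MvPolynomial (Fin 2) ℤ) * X 0 ^ (2*k + 2) * X 1 ^ (n - 2*k - 1))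
          = A k + Bt k := by
      intro k _
      by_cases h2k : 2*k + 1 ≤ n
      · rw [mul_assoc, D_cast_mul, Dterm D hy hz _ _ (by omega)]
        rw [(by omega : n - 2*k - 1 + 1 = n - 2*k), (by omega : n - 2*k - 1 - 1 = n - 2*(k+1))]
        rw [hA, hB]
        push_cast
        ring
      · have hz0 : peakNum n k = 0 := peakNum_eq_zero (by omega)
        rw [hA, hB]
        simp [hz0]
    rw [Finset.sum_congr rfl hDterm, Finset.sum_add_distrib]
    have hshift : (∑ k ∈ Finset.range (n+1), Bt k) = ∑ k ∈ Finset.range (n+2), g k := by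
      rw [Finset.sum_range_succ' g (n+1)]
      have : ∀ k ∈ Finset.range (n+1), Bt k = g (k+1) := by
        intro k _
        rw [hB, hg]
        simp only [Nat.add_sub_cancel, if_neg (Nat.succ_ne_zero k)]
      rw [Finset.sum_congr rfl this]
      simp [hg]
    have hext : (∑ k ∈ Finset.range (n+2), A k) = ∑ k ∈ Finset.range (n+1), A k := by
      have hz2 : A (n+1) = 0 := by
        have : peakNum n (n+1) = 0 := peakNum_eq_zero (by omega)
        rw [hA]
        simp [this]
      rw [Finset.sum_range_succ, hz2, add_zero]
    rw [hshift, ← hext, ← Finset.sum_add_distrib]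
    apply Finset.sum_congr rfl
    intro k _
    rw [(show n + 1 - 2*k - 1 = n - 2*k by omega), peakNum_rec hn k]
    by_cases hk : k = 0
    · subst hk
      rw [hA, hg]
      simp only [if_pos rfl, add_zero, if_pos]
      push_cast
      ring
    · rw [hA, hg]
      simp only [if_neg hk]
      push_cast
      ring


open MvPolynomial in
/-- For the grammar `G = {y → yz, z → y²}` (here `y = X 0`, `z = X 1`):
`Dⁿ(z) = ∑_{k=0}^{⌊(n-1)/2⌋} W(n,k) y^{2k+2} z^{n-2k-1}` for `n ≥ 1`. -/
theorem stmt13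
    (D : Derivation ℤ (MvPolynomial (Fin 2) ℤ) (MvPolynomial (Fin 2) ℤ))
    (hy : D (MvPolynomial.X 0) = MvPolynomial.X 0 * MvPolynomial.X 1)
    (hz : D (MvPolynomial.X 1) = MvPolynomial.X 0 ^ 2) :
    ∀ n : ℕ, 1 ≤ n →
      (⇑D)^[n] (MvPolynomial.X 1)
        = ∑ k ∈ Finset.range ((n-1)/2 + 1),
            (peakNum n k : MvPolynomial (Fin 2) ℤ)
              * MvPolynomial.X 0 ^ (2*k + 2) * MvPolynomial.X 1 ^ (n - 2*k - 1) := by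
  intro n hn
  rw [key_sum D hy hz n hn]
  symm
  apply Finset.sum_subset
  · apply Finset.range_subset_range.mpr
    omega
  · intro k _ hk
    rw [Finset.mem_range, not_lt] at hk
    have : peakNum n k = 0 := peakNum_eq_zero (by omega)
    simp [this]
end

section
/- Let D be the derivation on ℤ[x,y,z] with D(x) = xy, D(y) = yz, D(z) = y². Then for all n ≥ 1, D^n(x²) = x²·Σ_{k=1}^n R(n+1,k)·y^k·z^{n-k}, where R(n,k) satisfies R(n,k) = k·R(n-1,k) + 2·R(n-1,k-1) + (n-k)·R(n-1,k-2) with R(1,0) = 1 and R(1,k) = 0 for k ≥ 1. -/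
open Finset Polynomial

/-- `R(n,k)`, defined by the recurrence
`R(n,k) = k·R(n-1,k) + 2·R(n-1,k-1) + (n-k)·R(n-1,k-2)` with `R(1,0) = 1` and
`R(1,k) = 0` for `k ≥ 1` (terms with a negative second index being zero). -/
def Rrec : ℕ → ℕ → ℕ
  | 0, _ => 0
  | 1, 0 => 1
  | 1, _+1 => 0
  | n+2, k => k * Rrec (n+1) k + 2 * (if 1 ≤ k then Rrec (n+1) (k-1) else 0)
      + (n + 2 - k) * (if 2 ≤ k then Rrec (n+1) (k-2) else 0)

lemma Rrec_rec (n k : ℕ) : Rrec (n+2) k = k * Rrec (n+1) k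
    + 2 * (if 1 ≤ k then Rrec (n+1) (k-1) else 0)
    + (n + 2 - k) * (if 2 ≤ k then Rrec (n+1) (k-2) else 0) := rfl

lemma Rrec_zero (m : ℕ) : Rrec (m+2) 0 = 0 := by simp [Rrec]

lemma Rrec_big : ∀ m k, m ≤ k → Rrec m k = 0 := by
  intro m
  induction m with
  | zero => intro k _; rfl
  | succ m ih =>
    intro k hk
    match m, k with
    | 0, k+1 => rfl
    | m+1, k =>
      rw [show m+1+1 = m+2 from rfl, Rrec_rec, ih k (by omega)]
      have h2 : (if 1 ≤ k then Rrec (m + 1) (k - 1) else 0) = 0 := by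
        split
        · exact ih (k-1) (by omega)
        · rfl
      rw [h2, show m + 2 - k = 0 by omega]
      ring

lemma sum_step {A : Type*} [CommRing A] (m : ℕ) (y z : A) :
    ∑ k ∈ Finset.Icc 1 (m+1), (Rrec (m+2) k : A) *
       (2 * (y^(k+1) * z^(m+1-k)) + (k:A) * (y^k * z^(m+1-k+1))
         + ((m+1-k : ℕ):A) * (y^(k+2) * z^(m+1-k-1)))
    = ∑ k ∈ Finset.Icc 1 (m+2), (Rrec (m+3) k : A) * y^k * z^(m+2-k) := by
  rw [← Finset.Ico_add_one_right_eq_Icc, ← Finset.Ico_add_one_right_eq_Icc, Finset.sum_Ico_eq_sum_range,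
    Finset.sum_Ico_eq_sum_range]
  simp only [Nat.succ_sub_one, Nat.add_sub_cancel]
  have hR : ∀ i, Rrec (m+3) (1+i) = (1+i) * Rrec (m+2) (1+i) + 2 * Rrec (m+2) i
      + (m+2-i) * (if 1 ≤ i then Rrec (m+2) (i-1) else 0) := by
    intro i
    rw [show m+3 = (m+1)+2 from rfl, Rrec_rec, if_pos (by omega : (1:ℕ) ≤ 1+i),
      show 1+i-1 = i by omega, show m+1+2-(1+i) = m+2-i by omega]
    by_cases h : 1 ≤ i
    · rw [if_pos (by omega : (2:ℕ) ≤ 1+i), if_pos h, show 1+i-2 = i-1 by omega]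
    · rw [if_neg (by omega), if_neg h]
  have hRHS : (∑ i ∈ range (m+2), (Rrec (m+3) (1+i) : A) * y^(1+i) * z^(m+2-(1+i)))
      = (∑ i ∈ range (m+1), ((1+i:ℕ):A) * Rrec (m+2) (1+i) * y^(1+i) * z^(m+1-i))
        + (∑ i ∈ range (m+1), 2 * (Rrec (m+2) (1+i):A) * y^(2+i) * z^(m-i))
        + (∑ i ∈ range m, ((m-i:ℕ):A) * Rrec (m+2) (1+i) * y^(3+i) * z^(m-1-i)) := by
    have e1 : ∑ i ∈ range (m+2), (Rrec (m+3) (1+i) : A) * y^(1+i) * z^(m+2-(1+i))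
        = ∑ i ∈ range (m+2), (((1+i:ℕ):A) * Rrec (m+2) (1+i) * y^(1+i) * z^(m+1-i)
          + 2 * (Rrec (m+2) i : A) * y^(1+i) * z^(m+1-i)
          + ((m+2-i:ℕ):A) * (if 1 ≤ i then (Rrec (m+2) (i-1) : A) else 0)
              * y^(1+i) * z^(m+1-i)) := by
      refine Finset.sum_congr rfl fun i hi => ?_
      rw [hR i, show m+2-(1+i) = m+1-i by omega]
      push_cast
      split <;> ring
    rw [e1, Finset.sum_add_distrib, Finset.sum_add_distrib]
    have h1 : (∑ i ∈ range (m+2), ((1+i:ℕ):A) * Rrec (m+2) (1+i) * y^(1+i) * z^(m+1-i))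
        = ∑ i ∈ range (m+1), ((1+i:ℕ):A) * Rrec (m+2) (1+i) * y^(1+i) * z^(m+1-i) := by
      rw [Finset.sum_range_succ, Rrec_big (m+2) (1+(m+1)) (by omega)]
      simp
    have h2 : (∑ i ∈ range (m+2), 2 * (Rrec (m+2) i : A) * y^(1+i) * z^(m+1-i))
        = ∑ i ∈ range (m+1), 2 * (Rrec (m+2) (1+i):A) * y^(2+i) * z^(m-i) := by
      rw [Finset.sum_range_succ', Rrec_zero]
      simp only [Nat.cast_zero, mul_zero, zero_mul, add_zero]
      refine Finset.sum_congr rfl fun i hi => ?_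
      rw [show i+1 = 1+i by omega, show 1+(1+i) = 2+i by omega,
        show m+1-(1+i) = m-i by omega]
    have h3 : (∑ i ∈ range (m+2), ((m+2-i:ℕ):A)
          * (if 1 ≤ i then (Rrec (m+2) (i-1) : A) else 0) * y^(1+i) * z^(m+1-i))
        = ∑ i ∈ range m, ((m-i:ℕ):A) * Rrec (m+2) (1+i) * y^(3+i) * z^(m-1-i) := by
      rw [Finset.sum_range_succ']
      simp only [if_neg (by omega : ¬ (1:ℕ) ≤ 0), mul_zero, zero_mul, add_zero]
      have e2 : ∀ i ∈ range (m+1), ((m+2-(i+1):ℕ):A)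
            * (if 1 ≤ i+1 then (Rrec (m+2) (i+1-1) : A) else 0) * y^(1+(i+1)) * z^(m+1-(i+1))
          = ((m+1-i:ℕ):A) * (Rrec (m+2) i : A) * y^(2+i) * z^(m-i) := by
        intro i hi
        rw [if_pos (by omega), show i+1-1 = i from rfl, show m+2-(i+1) = m+1-i by omega,
          show 1+(i+1) = 2+i by omega, show m+1-(i+1) = m-i by omega]
      rw [Finset.sum_congr rfl e2, Finset.sum_range_succ', Rrec_zero]
      simp only [Nat.cast_zero, mul_zero, zero_mul, add_zero]
      refine Finset.sum_congr rfl fun i hi => ?_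
      simp only [Finset.mem_range] at hi
      rw [show m+1-(i+1) = m-i by omega, show 2+(i+1) = 3+i by omega,
        show m-(i+1) = m-1-i by omega, show i+1 = 1+i by omega]
    rw [h1, h2, h3]
  rw [hRHS]
  have e3 : ∀ i ∈ range (m+1), (Rrec (m+2) (1+i) : A) *
        (2 * (y^(1+i+1) * z^(m+1-(1+i))) + ((1+i:ℕ):A) * (y^(1+i) * z^(m+1-(1+i)+1))
          + ((m+1-(1+i):ℕ):A) * (y^(1+i+2) * z^(m+1-(1+i)-1)))
      = ((1+i:ℕ):A) * Rrec (m+2) (1+i) * y^(1+i) * z^(m+1-i)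
        + 2 * (Rrec (m+2) (1+i) : A) * y^(2+i) * z^(m-i)
        + ((m-i:ℕ):A) * Rrec (m+2) (1+i) * y^(3+i) * z^(m-i-1) := by
    intro i hi
    simp only [Finset.mem_range] at hi
    rw [show m+1-(1+i) = m-i by omega, show m-i+1 = m+1-i by omega,
      show 1+i+1 = 2+i by omega, show 1+i+2 = 3+i by omega]
    push_cast
    ring
  rw [Finset.sum_congr rfl e3, Finset.sum_add_distrib, Finset.sum_add_distrib]
  have h4 : (∑ i ∈ range (m+1), ((m-i:ℕ):A) * Rrec (m+2) (1+i) * y^(3+i) * z^(m-i-1))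
      = ∑ i ∈ range m, ((m-i:ℕ):A) * Rrec (m+2) (1+i) * y^(3+i) * z^(m-1-i) := by
    rw [Finset.sum_range_succ, show m - m = 0 from by omega]
    simp only [Nat.cast_zero, zero_mul, add_zero]
    refine Finset.sum_congr rfl fun i hi => ?_
    simp only [Finset.mem_range] at hi
    rw [show m-i-1 = m-1-i by omega]
  rw [h4]

/-- For the grammar `G = {x → xy, y → yz, z → y²}` (here `x = X 0`, `y = X 1`, `z = X 2`):
`Dⁿ(x²) = x²·∑_{k=1}^n R(n+1,k) y^k z^{n-k}` for `n ≥ 1`. -/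
theorem stmt14
    (D : Derivation ℤ (MvPolynomial (Fin 3) ℤ) (MvPolynomial (Fin 3) ℤ))
    (hx : D (MvPolynomial.X 0) = MvPolynomial.X 0 * MvPolynomial.X 1)
    (hy : D (MvPolynomial.X 1) = MvPolynomial.X 1 * MvPolynomial.X 2)
    (hz : D (MvPolynomial.X 2) = MvPolynomial.X 1 ^ 2) :
    ∀ n : ℕ, 1 ≤ n →
      (⇑D)^[n] (MvPolynomial.X 0 ^ 2)
        = MvPolynomial.X 0 ^ 2 * ∑ k ∈ Finset.Icc 1 n,
            (Rrec (n+1) k : MvPolynomial (Fin 3) ℤ)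
              * MvPolynomial.X 1 ^ k * MvPolynomial.X 2 ^ (n - k) := by
  set x := MvPolynomial.X (R := ℤ) (0 : Fin 3) with hxdef
  set y := MvPolynomial.X (R := ℤ) (1 : Fin 3) with hydef
  set z := MvPolynomial.X (R := ℤ) (2 : Fin 3) with hzdef
  have hD : ∀ k m : ℕ, 1 ≤ k → D (x ^ 2 * y ^ k * z ^ m)
      = 2 * (x ^ 2 * y ^ (k+1) * z ^ m)
        + (k : MvPolynomial (Fin 3) ℤ) * (x ^ 2 * y ^ k * z ^ (m+1))
        + (m : MvPolynomial (Fin 3) ℤ) * (x ^ 2 * y ^ (k+2) * z ^ (m-1)) := by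
    intro k m hk
    obtain ⟨k, rfl⟩ : ∃ k', k = k' + 1 := ⟨k - 1, by omega⟩
    rw [Derivation.leibniz, Derivation.leibniz, Derivation.leibniz_pow,
      Derivation.leibniz_pow, Derivation.leibniz_pow, hx, hy, hz]
    simp only [smul_eq_mul, smul_smul, Nat.cast_ofNat, nsmul_eq_mul, Nat.add_sub_cancel]
    cases m with
    | zero => push_cast; ring
    | succ m => push_cast [Nat.add_sub_cancel]; ring
  intro n hn
  induction n with
  | zero => omega
  | succ n ih =>
    rcases Nat.eq_or_lt_of_le hn with h1 | h1
    · -- base case n = 0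
      rw [← h1]
      rw [Function.iterate_one]
      rw [show Finset.Icc 1 1 = {1} from rfl, Finset.sum_singleton]
      rw [show Rrec 2 1 = 2 from rfl]
      rw [Derivation.leibniz_pow, hx]
      push_cast
      simp only [smul_eq_mul, nsmul_eq_mul, pow_one]
      ring
    · have hn' : 1 ≤ n := by omega
      rw [Function.iterate_succ_apply', ih hn']
      obtain ⟨m, rfl⟩ : ∃ m, n = m + 1 := ⟨n - 1, by omega⟩
      have hin : x ^ 2 * ∑ k ∈ Finset.Icc 1 (m+1),
            (Rrec (m+2) k : MvPolynomial (Fin 3) ℤ) * y ^ k * z ^ (m+1-k)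
          = ∑ k ∈ Finset.Icc 1 (m+1), (Rrec (m+2) k) • (x ^ 2 * y ^ k * z ^ (m+1-k)) := by
        rw [Finset.mul_sum]
        refine Finset.sum_congr rfl fun k hk => ?_
        rw [nsmul_eq_mul]
        ring
      rw [hin, map_sum]
      have hterm : ∀ k ∈ Finset.Icc 1 (m+1),
          D ((Rrec (m+2) k) • (x ^ 2 * y ^ k * z ^ (m+1-k)))
            = x ^ 2 * ((Rrec (m+2) k : MvPolynomial (Fin 3) ℤ) *
                (2 * (y^(k+1) * z^(m+1-k)) + (k : MvPolynomial (Fin 3) ℤ) * (y^k * z^(m+1-k+1))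
                  + ((m+1-k : ℕ) : MvPolynomial (Fin 3) ℤ) * (y^(k+2) * z^(m+1-k-1)))) := by
        intro k hk
        rw [Finset.mem_Icc] at hk
        rw [map_nsmul, hD k (m+1-k) hk.1, nsmul_eq_mul]
        ring
      rw [Finset.sum_congr rfl hterm, ← Finset.mul_sum, sum_step]
end

section
/- Let D be the derivation on ℤ[x,y,z] with D(x) = xy, D(y) = yz, D(z) = y². Then for all n ≥ 1, D^n(x) = x·Σ_{k=1}^n a_k(n)·y^k·z^{n-k}, where a_k(n) satisfies a_k(n) = k·a_k(n-1) + a_{k-1}(n-1) + (n-k+1)·a_{k-2}(n-1) with a_0(0) = a_1(1) = 1 and a_k(0) = a_0(n) = 0 for n,k ≥ 1. -/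
open Finset Polynomial

/-- `a_k(n)` (written `arec n k`), defined by the recurrence
`a_k(n) = k·a_k(n-1) + a_{k-1}(n-1) + (n-k+1)·a_{k-2}(n-1)` with
`a_0(0) = a_1(1) = 1` and `a_k(0) = a_0(n) = 0` for `n,k ≥ 1`
(terms with a negative index being zero). -/
def arec : ℕ → ℕ → ℕ
  | 0, 0 => 1
  | 0, _+1 => 0
  | _+1, 0 => 0
  | n+1, k+1 => (k+1) * arec n (k+1) + arec n k
      + (n + 1 - k) * (if 1 ≤ k then arec n (k-1) else 0)

lemma arec_zero_of_lt : ∀ n k : ℕ, n < k → arec n k = 0 := by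
  intro n
  induction n with
  | zero =>
    intro k hk
    match k, hk with
    | k+1, _ => rfl
  | succ n ih =>
    intro k hk
    match k, hk with
    | k+1, hk =>
      have h1 : arec n (k+1) = 0 := ih _ (by omega)
      have h2 : arec n k = 0 := ih _ (by omega)
      have h3 : n + 1 - k = 0 := by omega
      simp [arec, h1, h2, h3]

lemma arec_zero_left : ∀ n : ℕ, 1 ≤ n → arec n 0 = 0 := by
  intro n hn
  match n, hn with
  | n+1, _ => rfl


open MvPolynomial in
/-- For the grammar `G = {x → xy, y → yz, z → y²}` (here `x = X 0`, `y = X 1`, `z = X 2`):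
`Dⁿ(x) = x·∑_{k=1}^n a_k(n) y^k z^{n-k}` for `n ≥ 1`. -/
theorem stmt15
    (D : Derivation ℤ (MvPolynomial (Fin 3) ℤ) (MvPolynomial (Fin 3) ℤ))
    (hx : D (MvPolynomial.X 0) = MvPolynomial.X 0 * MvPolynomial.X 1)
    (hy : D (MvPolynomial.X 1) = MvPolynomial.X 1 * MvPolynomial.X 2)
    (hz : D (MvPolynomial.X 2) = MvPolynomial.X 1 ^ 2) :
    ∀ n : ℕ, 1 ≤ n →
      (⇑D)^[n] (MvPolynomial.X 0)
        = MvPolynomial.X 0 * ∑ k ∈ Finset.Icc 1 n,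
            (arec n k : MvPolynomial (Fin 3) ℤ)
              * MvPolynomial.X 1 ^ k * MvPolynomial.X 2 ^ (n - k) := by
  have h1 : ∀ k : ℕ, D (X 1 ^ k) = (k : MvPolynomial (Fin 3) ℤ) * X 1 ^ k * X 2 := by
    intro k
    cases k with
    | zero => simp
    | succ k =>
      rw [Derivation.leibniz_pow, hy, Nat.add_sub_cancel]
      simp only [nsmul_eq_mul, smul_eq_mul]
      push_cast
      ring
  have h2 : ∀ m : ℕ, D (X 2 ^ m) = (m : MvPolynomial (Fin 3) ℤ) * X 1 ^ 2 * X 2 ^ (m-1) := by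
    intro m
    cases m with
    | zero => simp
    | succ m =>
      rw [Derivation.leibniz_pow, hz, Nat.add_sub_cancel]
      simp only [nsmul_eq_mul, smul_eq_mul]
      push_cast
      ring
  have hterm : ∀ c k m : ℕ,
      D ((c : MvPolynomial (Fin 3) ℤ) * X 1 ^ k * X 2 ^ m)
        = (c : MvPolynomial (Fin 3) ℤ) * (k : MvPolynomial (Fin 3) ℤ) * X 1 ^ k * X 2 ^ (m+1)
          + (c : MvPolynomial (Fin 3) ℤ) * (m : MvPolynomial (Fin 3) ℤ) * X 1 ^ (k+2) * X 2 ^ (m-1) := by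
    intro c k m
    rw [Derivation.leibniz, Derivation.leibniz, h1 k, h2 m, D.map_natCast]
    simp only [smul_eq_mul, smul_zero, mul_zero, add_zero]
    ring
  have key : ∀ n : ℕ, 1 ≤ n →
      (⇑D)^[n] (X 0)
        = X 0 * ∑ k ∈ Finset.range (n+2),
            (arec n k : MvPolynomial (Fin 3) ℤ) * X 1 ^ k * X 2 ^ (n-k) := by
    intro n hn
    induction n with
    | zero => omega
    | succ n ih =>
      rcases Nat.eq_zero_or_pos n with h | h
      · subst h
        rw [zero_add, Function.iterate_one, hx]
        norm_num [Finset.sum_range_succ, arec]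
      · rw [Function.iterate_succ_apply', ih h, Derivation.leibniz, hx, map_sum]
        rw [Finset.sum_congr rfl (fun k _ => hterm (arec n k) k (n-k))]
        have hsum : ∑ j ∈ Finset.range (n+3),
              (arec (n+1) j : MvPolynomial (Fin 3) ℤ) * X 1 ^ j * X 2 ^ (n+1-j)
            = X 1 * (∑ k ∈ Finset.range (n+2),
                (arec n k : MvPolynomial (Fin 3) ℤ) * X 1 ^ k * X 2 ^ (n-k))
              + ∑ k ∈ Finset.range (n+2),
                ((arec n k : MvPolynomial (Fin 3) ℤ) * (k : MvPolynomial (Fin 3) ℤ)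
                    * X 1 ^ k * X 2 ^ (n-k+1)
                  + (arec n k : MvPolynomial (Fin 3) ℤ) * ((n-k : ℕ) : MvPolynomial (Fin 3) ℤ)
                    * X 1 ^ (k+2) * X 2 ^ (n-k-1)) := by
          have hL : ∑ j ∈ Finset.range (n+3),
                (arec (n+1) j : MvPolynomial (Fin 3) ℤ) * X 1 ^ j * X 2 ^ (n+1-j)
              = ∑ k ∈ Finset.range (n+2),
                  ((((k+1) * arec n (k+1) : ℕ) : MvPolynomial (Fin 3) ℤ) * X 1 ^ (k+1) * X 2 ^ (n-k)
                  + ((arec n k : ℕ) : MvPolynomial (Fin 3) ℤ) * X 1 ^ (k+1) * X 2 ^ (n-k)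
                  + (((n+1-k) * (if 1 ≤ k then arec n (k-1) else 0) : ℕ) : MvPolynomial (Fin 3) ℤ)
                      * X 1 ^ (k+1) * X 2 ^ (n-k)) := by
            rw [Finset.sum_range_succ']
            have h0 : arec (n+1) 0 = 0 := rfl
            rw [h0]
            simp only [Nat.cast_zero, zero_mul, add_zero]
            refine Finset.sum_congr rfl fun k hk => ?_
            have hj : n + 1 - (k+1) = n - k := by omega
            rw [hj]
            have he : arec (n+1) (k+1)
                = (k+1) * arec n (k+1) + arec n k
                  + (n + 1 - k) * (if 1 ≤ k then arec n (k-1) else 0) := by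
              simp [arec]
            rw [he]
            push_cast
            ring
          have hA : ∑ k ∈ Finset.range (n+2),
                (arec n k : MvPolynomial (Fin 3) ℤ) * (k : MvPolynomial (Fin 3) ℤ)
                  * X 1 ^ k * X 2 ^ (n-k+1)
              = ∑ k ∈ Finset.range (n+2),
                  (((k+1) * arec n (k+1) : ℕ) : MvPolynomial (Fin 3) ℤ) * X 1 ^ (k+1) * X 2 ^ (n-k) := by
            conv_lhs => rw [Finset.sum_range_succ' _ (n+1)]
            conv_rhs => rw [Finset.sum_range_succ]
            have hz1 : arec n (n+1+1) = 0 := arec_zero_of_lt _ _ (by omega)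
            simp only [hz1, Nat.mul_zero, mul_zero, Nat.cast_zero, zero_mul, mul_zero, add_zero]
            refine Finset.sum_congr rfl fun k hk => ?_
            rcases eq_or_lt_of_le (Nat.lt_succ_iff.mp (Finset.mem_range.mp hk)) with h' | h'
            · subst h'
              have : arec k (k+1) = 0 := arec_zero_of_lt _ _ (by omega)
              simp [this]
            · have : n - (k+1) + 1 = n - k := by omega
              rw [this]
              push_cast
              ring
          have hB : ∑ k ∈ Finset.range (n+2),
                (arec n k : MvPolynomial (Fin 3) ℤ) * ((n-k : ℕ) : MvPolynomial (Fin 3) ℤ)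
                  * X 1 ^ (k+2) * X 2 ^ (n-k-1)
              = ∑ k ∈ Finset.range (n+2),
                  (((n+1-k) * (if 1 ≤ k then arec n (k-1) else 0) : ℕ) : MvPolynomial (Fin 3) ℤ)
                    * X 1 ^ (k+1) * X 2 ^ (n-k) := by
            conv_lhs => rw [Finset.sum_range_succ]
            conv_rhs => rw [Finset.sum_range_succ' _ (n+1)]
            have hz1 : n - (n+1) = 0 := by omega
            simp only [hz1, Nat.cast_zero, mul_zero, zero_mul, add_zero]
            simp only [show ((1:ℕ) ≤ 0) = False from by simp, if_false, Nat.mul_zero,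
              Nat.cast_zero, zero_mul, add_zero]
            refine Finset.sum_congr rfl fun k hk => ?_
            have e1 : n + 1 - (k+1) = n - k := by omega
            have e2 : n - (k+1) = n - k - 1 := by omega
            have e3 : (if 1 ≤ k + 1 then arec n (k+1-1) else 0) = arec n k := by simp
            rw [e1, e2, e3]
            push_cast
            ring
          have hC : X 1 * (∑ k ∈ Finset.range (n+2),
                (arec n k : MvPolynomial (Fin 3) ℤ) * X 1 ^ k * X 2 ^ (n-k))
              = ∑ k ∈ Finset.range (n+2),
                  ((arec n k : ℕ) : MvPolynomial (Fin 3) ℤ) * X 1 ^ (k+1) * X 2 ^ (n-k) := by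
            rw [Finset.mul_sum]
            exact Finset.sum_congr rfl fun k _ => by ring
          rw [hL, hC, Finset.sum_add_distrib, Finset.sum_add_distrib, Finset.sum_add_distrib,
            hA, hB]
          ring
        rw [hsum]
        simp only [smul_eq_mul]
        ring
  intro n hn
  rw [key n hn]
  congr 1
  refine (Finset.sum_subset ?_ ?_).symm
  · intro k hk
    simp only [Finset.mem_Icc, Finset.mem_range] at *
    omega
  · intro k hk hk'
    simp only [Finset.mem_Icc, Finset.mem_range, not_and, not_le] at hk hk'
    have : arec n k = 0 := by
      rcases Nat.eq_zero_or_pos k with h | h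
      · subst h; exact arec_zero_left n hn
      · exact arec_zero_of_lt _ _ (by omega)
    simp [this]
end

section
/- Define T_n(x) by T_0(x) = 1, T_1(x) = x, T_{n+1}(x) = x(nx+1)·T_n(x) + x(1-x²)·T'_n(x), and R_n(x) by R_1(x) = 1, R_{n+2}(x) = x(nx+2)·R_{n+1}(x) + x(1-x²)·R'_{n+1}(x). Then for all n ≥ 1: R_{n+1}(x) = Σ_{k=0}^n C(n,k)·T_k(x)·T_{n-k}(x), where C(n,k) is the binomial coefficient. -/
open Finset Polynomial

/-- Convolution formula `R_{n+1}(x) = ∑_{k=0}^n C(n,k) T_k(x) T_{n-k}(x)` for `n ≥ 1`. -/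
theorem stmt16 (T : ℕ → Polynomial ℝ) (hT0 : T 0 = 1) (hT1 : T 1 = X)
    (hTrec : ∀ n : ℕ, T (n+1) =
      X * ((n : Polynomial ℝ) * X + 1) * T n + X * (1 - X^2) * derivative (T n))
    (R : ℕ → Polynomial ℝ) (hR1 : R 1 = 1)
    (hRrec : ∀ n : ℕ, R (n+2) =
      X * ((n : Polynomial ℝ) * X + 2) * R (n+1) + X * (1 - X^2) * derivative (R (n+1))) :
    ∀ n : ℕ, 1 ≤ n →
      R (n+1) = ∑ k ∈ Finset.range (n+1), (n.choose k : Polynomial ℝ) * T k * T (n-k) := by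
  set S : ℕ → Polynomial ℝ :=
    fun n => ∑ k ∈ Finset.range (n+1), (n.choose k : Polynomial ℝ) * T k * T (n-k) with hS
  -- Combinatorial splitting of S (n+1) via Pascal's rule
  have hsplit : ∀ n : ℕ, S (n+1) =
      ∑ k ∈ Finset.range (n+1),
        (n.choose k : Polynomial ℝ) * (T (k+1) * T (n-k) + T k * T (n+1-k)) := by
    intro n
    have h1 : S (n+1) =
        (∑ k ∈ Finset.range (n+1),
          ((n.choose k : Polynomial ℝ) + (n.choose (k+1) : Polynomial ℝ)) * T (k+1) * T (n-k))
        + T 0 * T (n+1) := by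
      show ∑ k ∈ Finset.range (n+1+1), (((n+1).choose k : Polynomial ℝ)) * T k * T (n+1-k) = _
      rw [Finset.sum_range_succ' (fun k => (((n+1).choose k : Polynomial ℝ)) * T k * T (n+1-k)) (n+1)]
      simp only [Nat.succ_sub_succ, Nat.choose_succ_succ, Nat.choose_zero_right,
        Nat.sub_zero, Nat.cast_add, Nat.cast_one, one_mul]
    rw [h1]
    have h2 : ∑ k ∈ Finset.range (n+1),
        (n.choose k : Polynomial ℝ) * (T (k+1) * T (n-k) + T k * T (n+1-k))
      = (∑ k ∈ Finset.range (n+1), (n.choose k : Polynomial ℝ) * (T (k+1) * T (n-k)))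
        + ∑ k ∈ Finset.range (n+1), (n.choose k : Polynomial ℝ) * (T k * T (n+1-k)) := by
      rw [← Finset.sum_add_distrib]
      exact Finset.sum_congr rfl fun k _ => by ring
    rw [h2]
    have h3 : ∑ k ∈ Finset.range (n+1), (n.choose k : Polynomial ℝ) * (T k * T (n+1-k))
        = (∑ k ∈ Finset.range n, (n.choose (k+1) : Polynomial ℝ) * (T (k+1) * T (n-k)))
          + T 0 * T (n+1) := by
      rw [Finset.sum_range_succ' (fun k => (n.choose k : Polynomial ℝ) * (T k * T (n+1-k))) n]
      simp only [Nat.succ_sub_succ, Nat.choose_zero_right, Nat.sub_zero, Nat.cast_one, one_mul]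
    rw [h3]
    have h4 : ∑ k ∈ Finset.range (n+1),
        ((n.choose k : Polynomial ℝ) + (n.choose (k+1) : Polynomial ℝ)) * T (k+1) * T (n-k)
      = (∑ k ∈ Finset.range (n+1), (n.choose k : Polynomial ℝ) * (T (k+1) * T (n-k)))
        + ∑ k ∈ Finset.range n, (n.choose (k+1) : Polynomial ℝ) * (T (k+1) * T (n-k)) := by
      have : ∑ k ∈ Finset.range (n+1),
          ((n.choose k : Polynomial ℝ) + (n.choose (k+1) : Polynomial ℝ)) * T (k+1) * T (n-k)
        = (∑ k ∈ Finset.range (n+1), (n.choose k : Polynomial ℝ) * (T (k+1) * T (n-k)))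
          + ∑ k ∈ Finset.range (n+1), (n.choose (k+1) : Polynomial ℝ) * (T (k+1) * T (n-k)) := by
        rw [← Finset.sum_add_distrib]
        exact Finset.sum_congr rfl fun k _ => by ring
      rw [this, Finset.sum_range_succ
        (fun k => ((n.choose (k+1) : Polynomial ℝ)) * (T (k+1) * T (n-k))) n]
      simp [Nat.choose_succ_self]
    rw [h4]
    ring
  -- S satisfies the same recurrence as R (shifted)
  have key : ∀ n : ℕ, S (n+1) =
      X * ((n : Polynomial ℝ) * X + 2) * S n + X * (1 - X^2) * derivative (S n) := by
    intro n
    rw [hsplit n]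
    have hterm : ∀ k ∈ Finset.range (n+1),
        (n.choose k : Polynomial ℝ) * (T (k+1) * T (n-k) + T k * T (n+1-k))
        = X * ((n : Polynomial ℝ) * X + 2) * ((n.choose k : Polynomial ℝ) * T k * T (n-k))
          + X * (1 - X^2) * derivative ((n.choose k : Polynomial ℝ) * T k * T (n-k)) := by
      intro k hk
      have hk' : k ≤ n := Nat.lt_succ_iff.mp (Finset.mem_range.mp hk)
      have hsub : n + 1 - k = (n - k) + 1 := by omega
      have hcast : ((n - k : ℕ) : Polynomial ℝ) = (n : Polynomial ℝ) - (k : Polynomial ℝ) := by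
        push_cast [hk']; ring
      rw [hsub, hTrec k, hTrec (n-k), hcast, derivative_mul, derivative_mul,
        derivative_natCast]
      ring
    rw [Finset.sum_congr rfl hterm, Finset.sum_add_distrib, ← Finset.mul_sum, ← Finset.mul_sum,
      ← derivative_sum]
  -- Induction
  intro n hn
  induction n with
  | zero => omega
  | succ m ih =>
    rcases Nat.eq_or_lt_of_le hn with h1 | h1
    · -- m + 1 = 1, i.e. m = 0
      have hm : m = 0 := by omega
      subst hm
      have : R 2 = X * ((0 : Polynomial ℝ) * X + 2) * R 1 + X * (1 - X^2) * derivative (R 1) := by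
        simpa using hRrec 0
      show R 2 = _
      rw [this, hR1]
      simp only [hS, Finset.sum_range_succ, Finset.sum_range_zero, hT0, hT1]
      simp
      ring
    · have hm : 1 ≤ m := by omega
      have ihm := ih hm
      have := hRrec m
      rw [ihm] at this
      rw [show m+1+1 = m+2 by rfl, this, ← key m]
end

section
/- With T_n(x) and R_n(x) defined by T_0(x) = 1, T_1(x) = x, T_{n+1}(x) = x(nx+1)·T_n(x) + x(1-x²)·T'_n(x), and R_1(x) = 1, R_{n+2}(x) = x(nx+2)·R_{n+1}(x) + x(1-x²)·R'_{n+1}(x), for all n ≥ 1: R_{n+2}(x) = 2·Σ_{k=0}^n C(n,k)·T_k(x)·T_{n-k+1}(x). -/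
open Finset Polynomial

/-- Convolution formula `R_{n+2}(x) = 2∑_{k=0}^n C(n,k) T_k(x) T_{n-k+1}(x)` for `n ≥ 1`. -/
theorem stmt17 (T : ℕ → Polynomial ℝ) (hT0 : T 0 = 1) (hT1 : T 1 = X)
    (hTrec : ∀ n : ℕ, T (n+1) =
      X * ((n : Polynomial ℝ) * X + 1) * T n + X * (1 - X^2) * derivative (T n))
    (R : ℕ → Polynomial ℝ) (hR1 : R 1 = 1)
    (hRrec : ∀ n : ℕ, R (n+2) =
      X * ((n : Polynomial ℝ) * X + 2) * R (n+1) + X * (1 - X^2) * derivative (R (n+1))) :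
    ∀ n : ℕ, 1 ≤ n →
      R (n+2) = 2 * ∑ k ∈ Finset.range (n+1),
        (n.choose k : Polynomial ℝ) * T k * T (n-k+1) := by
  have main : ∀ n : ℕ, R (n+2) = 2 * ∑ k ∈ Finset.range (n+1),
      (n.choose k : Polynomial ℝ) * T k * T (n-k+1) := by
    intro n
    induction n with
    | zero =>
      rw [hRrec 0, hR1]
      simp [hT0, hT1]
      ring
    | succ n ih =>
      rw [hRrec (n+1), ih]
      set f : ℕ → Polynomial ℝ := fun k => T k * T (n+2-k) with hf
      -- termwise identity using the T recurrence
      have step : ∀ k ∈ Finset.range (n+1),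
          X * (((n+1 : ℕ) : Polynomial ℝ) * X + 2) *
              ((n.choose k : Polynomial ℝ) * T k * T (n-k+1))
            + X * (1 - X^2) *
              derivative ((n.choose k : Polynomial ℝ) * T k * T (n-k+1))
          = (n.choose k : Polynomial ℝ) * f (k+1)
            + (n.choose k : Polynomial ℝ) * f k := by
        intro k hk
        have hkn : k ≤ n := Nat.lt_succ_iff.mp (Finset.mem_range.mp hk)
        have hfk1 : f (k+1) = T (k+1) * T (n-k+1) := by
          show T (k+1) * T (n+2-(k+1)) = T (k+1) * T (n-k+1)
          have : n+2-(k+1) = n-k+1 := by omega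
          rw [this]
        have hfk : f k = T k * T (n-k+2) := by
          show T k * T (n+2-k) = T k * T (n-k+2)
          have : n+2-k = n-k+2 := by omega
          rw [this]
        rw [hfk1, hfk]
        have h1 : T (k+1) = X * ((k : Polynomial ℝ) * X + 1) * T k
            + X * (1 - X^2) * derivative (T k) := hTrec k
        have h2 : T (n-k+2) = X * (((n-k+1 : ℕ) : Polynomial ℝ) * X + 1) * T (n-k+1)
            + X * (1 - X^2) * derivative (T (n-k+1)) := hTrec (n-k+1)
        have hcast : ((n - k + 1 : ℕ) : Polynomial ℝ) = (n : Polynomial ℝ) - k + 1 := by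
          push_cast [Nat.cast_sub hkn]; ring
        rw [h1, h2, hcast, derivative_mul, derivative_mul, derivative_natCast]
        push_cast
        ring
      -- expand the LHS into termwise form
      have expand : X * (((n+1 : ℕ) : Polynomial ℝ) * X + 2) *
            (2 * ∑ k ∈ Finset.range (n+1), (n.choose k : Polynomial ℝ) * T k * T (n-k+1))
          + X * (1 - X^2) *
            derivative (2 * ∑ k ∈ Finset.range (n+1),
                (n.choose k : Polynomial ℝ) * T k * T (n-k+1))
          = 2 * ((∑ k ∈ Finset.range (n+1), (n.choose k : Polynomial ℝ) * f (k+1))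
            + ∑ k ∈ Finset.range (n+1), (n.choose k : Polynomial ℝ) * f k) := by
        rw [← Finset.sum_add_distrib, ← Finset.sum_congr rfl step]
        rw [derivative_mul, derivative_sum]
        simp only [derivative_ofNat, Finset.mul_sum, ← Finset.sum_add_distrib]
        apply Finset.sum_congr rfl
        intro k _
        push_cast
        ring
      push_cast at expand ⊢
      rw [expand]
      congr 1
      -- rewrite the target sum in terms of f
      have e3 : ∑ k ∈ Finset.range (n+2),
            ((n+1).choose k : Polynomial ℝ) * T k * T (n+1-k+1)
          = ∑ k ∈ Finset.range (n+2), ((n+1).choose k : Polynomial ℝ) * f k := by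
        apply Finset.sum_congr rfl
        intro k hk
        have hkn : k ≤ n+1 := Nat.lt_succ_iff.mp (Finset.mem_range.mp hk)
        have hfk : f k = T k * T (n+1-k+1) := by
          show T k * T (n+2-k) = T k * T (n+1-k+1)
          have : n+2-k = n+1-k+1 := by omega
          rw [this]
        rw [hfk, mul_assoc]
      push_cast at e3 ⊢
      rw [e3]
      -- Pascal reindexing
      rw [Finset.sum_range_succ' (fun k => (((n+1).choose k : ℕ) : Polynomial ℝ) * f k) (n+1)]
      have pascal : ∀ k, (((n+1).choose (k+1) : ℕ) : Polynomial ℝ)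
          = ((n.choose k : ℕ) : Polynomial ℝ) + ((n.choose (k+1) : ℕ) : Polynomial ℝ) := by
        intro k
        rw [Nat.choose_succ_succ]
        push_cast
        ring
      simp only [pascal, add_mul, Finset.sum_add_distrib]
      have e4 : ∑ k ∈ Finset.range (n+1), ((n.choose (k+1) : ℕ) : Polynomial ℝ) * f (k+1)
          = (∑ k ∈ Finset.range (n+1), ((n.choose k : ℕ) : Polynomial ℝ) * f k)
            - ((n.choose 0 : ℕ) : Polynomial ℝ) * f 0 := by
        have h1 := Finset.sum_range_succ' (fun k => ((n.choose k : ℕ) : Polynomial ℝ) * f k) (n+1)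
        have h0 : ∑ k ∈ Finset.range (n+2), ((n.choose k : ℕ) : Polynomial ℝ) * f k
            = ∑ k ∈ Finset.range (n+1), ((n.choose k : ℕ) : Polynomial ℝ) * f k := by
          rw [Finset.sum_range_succ]
          simp [Nat.choose_succ_self]
        rw [h0] at h1
        simp only [hf, ← mul_assoc] at h1 ⊢
        linear_combination -h1
      rw [e4]
      simp only [Nat.choose_zero_right, Nat.cast_one, one_mul]
      ring
  intro n _
  exact main n
end

section
/- Define T_n(x) by T_0(x) = 1, T_1(x) = x, T_{n+1}(x) = x(nx+1)·T_n(x) + x(1-x²)·T'_n(x), and W̃_n(x) by W̃_0(x) = 1 and W̃_{n+1}(x) = (nx+1)·W̃_n(x) + 2x(1-x)·W̃'_n(x). Then for all n ≥ 1: T_{n+1}(x) = x·Σ_{k=0}^n C(n,k)·T_k(x)·W̃_{n-k}(x²). -/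
open Finset Polynomial

/-- Convolution formula `T_{n+1}(x) = x∑_{k=0}^n C(n,k) T_k(x) W̃_{n-k}(x²)` for `n ≥ 1`. -/
theorem stmt18 (T : ℕ → Polynomial ℝ) (hT0 : T 0 = 1) (hT1 : T 1 = X)
    (hTrec : ∀ n : ℕ, T (n+1) =
      X * ((n : Polynomial ℝ) * X + 1) * T n + X * (1 - X^2) * derivative (T n))
    (Wt : ℕ → Polynomial ℝ) (hWt0 : Wt 0 = 1)
    (hWtrec : ∀ n : ℕ, Wt (n+1) =
      ((n : Polynomial ℝ) * X + 1) * Wt n + 2 * X * (1 - X) * derivative (Wt n)) :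
    ∀ n : ℕ, 1 ≤ n →
      T (n+1) = X * ∑ k ∈ Finset.range (n+1),
        (n.choose k : Polynomial ℝ) * T k * (Wt (n-k)).comp (X^2) := by
  suffices h : ∀ n : ℕ, T (n+1) = X * ∑ k ∈ Finset.range (n+1),
      (n.choose k : Polynomial ℝ) * T k * (Wt (n-k)).comp (X^2) from fun n _ => h n
  have hWcomp : ∀ m : ℕ, (Wt (m+1)).comp (X^2) =
      ((m : Polynomial ℝ) * X^2 + 1) * (Wt m).comp (X^2)
        + (X * (1 - X^2)) * derivative ((Wt m).comp (X^2)) := by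
    intro m
    rw [hWtrec m, derivative_comp]
    simp only [add_comp, mul_comp, one_comp, sub_comp, X_comp, natCast_comp, pow_comp,
      ofNat_comp, derivative_X_pow, map_ofNat]
    push_cast [Polynomial.C_eq_natCast, map_ofNat]
    ring
  intro n
  induction n with
  | zero => simp [hT1, hT0, hWt0]
  | succ n ih =>
    have hSrec : (∑ k ∈ Finset.range (n+2), ((n+1).choose k : Polynomial ℝ) * T k * (Wt (n+1-k)).comp (X^2))
        = ((n : Polynomial ℝ) * X^2 + X + 1) *
            (∑ k ∈ Finset.range (n+1), (n.choose k : Polynomial ℝ) * T k * (Wt (n-k)).comp (X^2))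
          + X * (1 - X^2) * derivative
            (∑ k ∈ Finset.range (n+1), (n.choose k : Polynomial ℝ) * T k * (Wt (n-k)).comp (X^2)) := by
      have hg : ∀ k, k ≤ n → (Wt (n + 1 - k)) = Wt ((n - k) + 1) := by
        intro k hk; rw [Nat.succ_sub hk]
      have split : (∑ k ∈ Finset.range (n+2), ((n+1).choose k : Polynomial ℝ) * T k * (Wt (n+1-k)).comp (X^2))
          = ∑ k ∈ Finset.range (n+1), (n.choose k : Polynomial ℝ) *
              (T (k+1) * (Wt (n-k)).comp (X^2) + T k * (Wt ((n-k)+1)).comp (X^2)) := by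
        calc (∑ k ∈ Finset.range (n+2), ((n+1).choose k : Polynomial ℝ) * T k * (Wt (n+1-k)).comp (X^2))
            = (∑ i ∈ Finset.range (n+1), ((n+1).choose (i+1) : Polynomial ℝ) * T (i+1) * (Wt (n-i)).comp (X^2))
              + ((n+1).choose 0 : Polynomial ℝ) * T 0 * (Wt (n+1)).comp (X^2) := by
              rw [Finset.sum_range_succ']
              simp [Nat.succ_sub_succ]
          _ = (∑ i ∈ Finset.range (n+1), (n.choose i : Polynomial ℝ) * T (i+1) * (Wt (n-i)).comp (X^2))
              + ((∑ i ∈ Finset.range (n+1), (n.choose (i+1) : Polynomial ℝ) * T (i+1) * (Wt (n-i)).comp (X^2))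
                + (n.choose 0 : Polynomial ℝ) * T 0 * (Wt (n+1)).comp (X^2)) := by
              simp only [Nat.choose_succ_succ, Nat.cast_add, add_mul, Nat.choose_zero_right]
              rw [Finset.sum_add_distrib]
              push_cast
              ring
          _ = (∑ i ∈ Finset.range (n+1), (n.choose i : Polynomial ℝ) * T (i+1) * (Wt (n-i)).comp (X^2))
              + (∑ k ∈ Finset.range (n+2), (n.choose k : Polynomial ℝ) * T k * (Wt (n+1-k)).comp (X^2)) := by
              congr 1
              conv_rhs => rw [Finset.sum_range_succ']
              simp [Nat.succ_sub_succ]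
          _ = (∑ i ∈ Finset.range (n+1), (n.choose i : Polynomial ℝ) * T (i+1) * (Wt (n-i)).comp (X^2))
              + (∑ k ∈ Finset.range (n+1), (n.choose k : Polynomial ℝ) * T k * (Wt ((n-k)+1)).comp (X^2)) := by
              congr 1
              rw [Finset.sum_range_succ, Nat.choose_succ_self]
              push_cast
              rw [zero_mul, zero_mul, add_zero]
              exact Finset.sum_congr rfl fun k hk => by
                rw [hg k (Nat.lt_succ_iff.mp (Finset.mem_range.mp hk))]
          _ = ∑ k ∈ Finset.range (n+1), (n.choose k : Polynomial ℝ) *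
                (T (k+1) * (Wt (n-k)).comp (X^2) + T k * (Wt ((n-k)+1)).comp (X^2)) := by
              rw [← Finset.sum_add_distrib]
              exact Finset.sum_congr rfl fun k _ => by ring
      rw [split, derivative_sum, Finset.mul_sum, Finset.mul_sum, ← Finset.sum_add_distrib]
      refine Finset.sum_congr rfl fun k hk => ?_
      have hkn : k ≤ n := Nat.lt_succ_iff.mp (Finset.mem_range.mp hk)
      rw [hTrec k, hWcomp (n-k), derivative_mul, derivative_mul, derivative_natCast]
      have hcast : ((n - k : ℕ) : Polynomial ℝ) = (n : Polynomial ℝ) - (k : Polynomial ℝ) := by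
        push_cast [hkn]; ring
      rw [hcast]
      ring
    rw [hTrec (n+1), ih, hSrec]
    rw [derivative_mul, derivative_X]
    push_cast
    ring
end

section
/- Define T_n(x) by T_0(x) = 1, T_1(x) = x, T_{n+1}(x) = x(nx+1)·T_n(x) + x(1-x²)·T'_n(x), and W_n(x) by W_1(x) = 1 and W_{n+1}(x) = (nx-x+2)·W_n(x) + 2x(1-x)·W'_n(x). Then for all n ≥ 1: T_{n+1}(x) = T_n(x) + x²·Σ_{k=0}^{n-1} C(n,k)·T_k(x)·W_{n-k}(x²). -/
open Finset Polynomial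

/-- Convolution formula `T_{n+1}(x) = T_n(x) + x²∑_{k=0}^{n-1} C(n,k) T_k(x) W_{n-k}(x²)`
for `n ≥ 1`. -/
theorem stmt19 (T : ℕ → Polynomial ℝ) (hT0 : T 0 = 1) (hT1 : T 1 = X)
    (hTrec : ∀ n : ℕ, T (n+1) =
      X * ((n : Polynomial ℝ) * X + 1) * T n + X * (1 - X^2) * derivative (T n))
    (W : ℕ → Polynomial ℝ) (hW1 : W 1 = 1)
    (hWrec : ∀ n : ℕ, 1 ≤ n → W (n+1) =
      ((n : Polynomial ℝ) * X - X + 2) * W n + 2 * X * (1 - X) * derivative (W n)) :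
    ∀ n : ℕ, 1 ≤ n →
      T (n+1) = T n + X^2 * ∑ k ∈ Finset.range n,
        (n.choose k : Polynomial ℝ) * T k * (W (n-k)).comp (X^2) := by
  have hX2 : derivative ((X:Polynomial ℝ)^2) = 2*X := by
    rw [derivative_X_pow, Nat.cast_ofNat, map_ofNat]; norm_num
  have hVrec : ∀ m : ℕ, 1 ≤ m → (W (m+1)).comp (X^2) =
      ((m:Polynomial ℝ)*X^2 - X^2 + 2) * (W m).comp (X^2)
        + X*(1-X^2) * derivative ((W m).comp (X^2)) := by
    intro m hm
    rw [hWrec m hm, derivative_comp]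
    simp only [add_comp, mul_comp, sub_comp, natCast_comp, X_comp, ofNat_comp, one_comp, hX2,
      Nat.cast_ofNat]
    ring
  intro n hn
  induction n with
  | zero => omega
  | succ m ih =>
    by_cases hm0 : m = 0
    · subst hm0
      rw [Finset.sum_range_one]
      norm_num [hT0, hW1]
      rw [hTrec 1, hT1]
      simp only [derivative_X, Nat.cast_one]
      ring
    · have hm1 : 1 ≤ m := by omega
      have IH := ih hm1
      -- claim1 : Pascal reshuffle of the sum
      have claim1 :
          ∑ k ∈ Finset.range (m+1), ((m+1).choose k : Polynomial ℝ) * T k * (W (m+1-k)).comp (X^2)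
          = (∑ k ∈ Finset.range m, (m.choose k : Polynomial ℝ) *
              (T (k+1) * (W (m-k)).comp (X^2) + T k * (W (m+1-k)).comp (X^2))) + T m := by
        rw [Finset.sum_range_succ']
        have step : ∀ k ∈ Finset.range m,
            (((m+1).choose (k+1) : Polynomial ℝ)) * T (k+1) * (W (m+1-(k+1))).comp (X^2)
            = (m.choose k : Polynomial ℝ) * (T (k+1) * (W (m-k)).comp (X^2))
              + (m.choose (k+1) : Polynomial ℝ) * T (k+1) * (W (m-k)).comp (X^2) := by
          intro k hk
          have h : m+1-(k+1) = m-k := by omega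
          rw [h, Nat.choose_succ_succ]
          push_cast
          ring
        rw [Finset.sum_congr rfl step, Finset.sum_add_distrib]
        have e3 : ∑ k ∈ Finset.range (m+1),
              (m.choose k : Polynomial ℝ) * T k * (W (m+1-k)).comp (X^2)
            = (∑ k ∈ Finset.range m,
                (m.choose (k+1) : Polynomial ℝ) * T (k+1) * (W (m-k)).comp (X^2))
              + (m.choose 0 : Polynomial ℝ) * T 0 * (W (m+1-0)).comp (X^2) := by
          rw [Finset.sum_range_succ']
          congr 1
          refine Finset.sum_congr rfl fun k hk => ?_
          have h : m+1-(k+1) = m-k := by omega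
          rw [h]
        have e4 : ∑ k ∈ Finset.range (m+1),
              (m.choose k : Polynomial ℝ) * T k * (W (m+1-k)).comp (X^2)
            = (∑ k ∈ Finset.range m, (m.choose k : Polynomial ℝ) *
                (T k * (W (m+1-k)).comp (X^2))) + T m := by
          rw [Finset.sum_range_succ]
          have h : m+1-m = 1 := by omega
          rw [h, Nat.choose_self, hW1]
          simp [mul_assoc]
        have e5 : ∀ k ∈ Finset.range m, (m.choose k : Polynomial ℝ) *
            (T (k+1) * (W (m-k)).comp (X^2) + T k * (W (m+1-k)).comp (X^2))
            = (m.choose k : Polynomial ℝ) * (T (k+1) * (W (m-k)).comp (X^2))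
              + (m.choose k : Polynomial ℝ) * (T k * (W (m+1-k)).comp (X^2)) :=
          fun k hk => mul_add _ _ _
        rw [Finset.sum_congr rfl e5, Finset.sum_add_distrib]
        have hz : ((m+1).choose 0 : Polynomial ℝ) * T 0 * (W (m+1-0)).comp (X^2)
            = (m.choose 0 : Polynomial ℝ) * T 0 * (W (m+1-0)).comp (X^2) := by
          simp
        rw [hz]
        linear_combination e4 - e3
      -- termwise identity
      have hterm : ∀ k ∈ Finset.range m,
          (X:Polynomial ℝ)^2 * ((m.choose k : Polynomial ℝ) *
            (T (k+1) * (W (m-k)).comp (X^2) + T k * (W (m+1-k)).comp (X^2)))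
          = X*(((m+1 : ℕ) : Polynomial ℝ)*X+1) *
              (X^2 * ((m.choose k : Polynomial ℝ) * T k * (W (m-k)).comp (X^2)))
            + X*(1-X^2) * derivative
              (X^2 * ((m.choose k : Polynomial ℝ) * T k * (W (m-k)).comp (X^2))) := by
        intro k hk
        rw [Finset.mem_range] at hk
        have h1 : m+1-k = (m-k)+1 := by omega
        have h2 : 1 ≤ m-k := by omega
        rw [h1, hTrec k, hVrec (m-k) h2]
        simp only [derivative_mul, derivative_natCast, hX2, zero_mul, zero_add, mul_zero]
        have hc : ((m-k : ℕ) : Polynomial ℝ) = (m : Polynomial ℝ) - (k : Polynomial ℝ) := by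
          push_cast [Nat.cast_sub hk.le]; ring
        rw [hc]
        push_cast
        ring
      -- key identity
      have key : (X:Polynomial ℝ)^2 * ∑ k ∈ Finset.range (m+1),
            ((m+1).choose k : Polynomial ℝ) * T k * (W (m+1-k)).comp (X^2)
          = X*(((m+1 : ℕ) : Polynomial ℝ)*X+1) * (X^2 * ∑ k ∈ Finset.range m,
              (m.choose k : Polynomial ℝ) * T k * (W (m-k)).comp (X^2))
            + X^2 * T m
            + X*(1-X^2) * derivative (X^2 * ∑ k ∈ Finset.range m,
              (m.choose k : Polynomial ℝ) * T k * (W (m-k)).comp (X^2)) := by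
        rw [claim1, mul_add, Finset.mul_sum, Finset.sum_congr rfl hterm,
          Finset.sum_add_distrib]
        simp only [Finset.mul_sum, derivative_sum]
        ring
      rw [hTrec (m+1), key, IH, derivative_add]
      have h6 : X*((m : Polynomial ℝ)*X+1) * T m + X*(1-X^2) * derivative (T m)
          = T m + X^2 * ∑ k ∈ Finset.range m,
              (m.choose k : Polynomial ℝ) * T k * (W (m-k)).comp (X^2) :=
        (hTrec m).symm.trans IH
      push_cast
      push_cast at h6
      linear_combination h6
end
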